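/- Two-sided bound on the finite product ∏(1 − λμ/j)² (Lemma 4, inequality part): Let λ > 0 and μ > 0 with λμ not an integer, and set n₀ := ⌈λμ⌉. Then for all sufficiently large integers i, ( (1 − λμ/i)^{2i} · (n₀ − λμ + 1)^{2λμ} ) / ( (i − λμ)^{2λμ} · (1 − λμ/(n₀+1))^{2(n₀+1)} ) ≤ ∏_{j=n₀+2}^{i} (1 − λμ/j)² ≤ ( (1 − λμ/(i+1))^{2i+2} · (n₀ − λμ + 2)^{2λμ} ) / ( (i + 1 − λμ)^{2λμ} · (1 − λμ/(n₀+2))^{2(n₀+2)} ). -/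

import Mathlib

noncomputable def Haux (c x : ℝ) : ℝ :=
  2*x*Real.log (x - c) - 2*x*Real.log x - 2*c*Real.log (x - c)

lemma Haux_deriv (c : ℝ) (hc : 0 < c) {x : ℝ} (hx : c < x) :
    HasDerivAt (Haux c) (2*(Real.log (x - c) - Real.log x)) x := by
  have hx0 : (0:ℝ) < x := hc.trans hx
  have hxc : (0:ℝ) < x - c := by linarith
  have h1 : HasDerivAt (fun y : ℝ => Real.log (y - c)) (1/(x-c)) x := by
    have := (Real.hasDerivAt_log hxc.ne').comp x ((hasDerivAt_id x).sub_const c)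
    simpa [one_div] using ((hasDerivAt_id x).sub_const c).log hxc.ne'
  have h2 : HasDerivAt (fun y : ℝ => Real.log y) (1/x) x := by
    simpa [one_div] using Real.hasDerivAt_log hx0.ne'
  have h2y : HasDerivAt (fun y : ℝ => 2*y) (2:ℝ) x := by
    simpa using (hasDerivAt_id x).const_mul (2:ℝ)
  have h3 := h2y.mul h1
  have h4 := h2y.mul h2
  have h5 := h1.const_mul (2*c)
  have h6 := (h3.sub h4).sub h5
  refine h6.congr_deriv ?_
  field_simp
  ring

lemma phi_mono (c : ℝ) (hc : 0 < c) {x y : ℝ} (hx : c < x) (hxy : x ≤ y) :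
    Real.log (x - c) - Real.log x ≤ Real.log (y - c) - Real.log y := by
  have hx0 : 0 < x := hc.trans hx
  have hy0 : 0 < y := lt_of_lt_of_le hx0 hxy
  have hxc : 0 < x - c := by linarith
  have hyc : 0 < y - c := by linarith
  rw [sub_le_sub_iff, ← Real.log_mul (by positivity) (by positivity),
      ← Real.log_mul (by positivity) (by positivity)]
  apply Real.log_le_log (by positivity)
  nlinarith

lemma Haux_step (c : ℝ) (hc : 0 < c) {x : ℝ} (hx : c < x) :
    2*(Real.log (x - c) - Real.log x) ≤ Haux c (x+1) - Haux c x ∧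
    Haux c (x+1) - Haux c x ≤ 2*(Real.log (x+1-c) - Real.log (x+1)) := by
  obtain ⟨ξ, hξ, hslope⟩ := exists_hasDerivAt_eq_slope (Haux c)
    (fun y => 2*(Real.log (y - c) - Real.log y)) (by linarith : x < x+1)
    (fun y hy => (Haux_deriv c hc (lt_of_lt_of_le hx hy.1)).continuousAt.continuousWithinAt)
    (fun y hy => Haux_deriv c hc (hx.trans hy.1))
  rw [show x+1-x = (1:ℝ) by ring, div_one] at hslope
  constructor
  · rw [← hslope]
    exact mul_le_mul_of_nonneg_left (phi_mono c hc hx hξ.1.le) (by norm_num)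
  · rw [← hslope]
    exact mul_le_mul_of_nonneg_left (phi_mono c hc (hx.trans hξ.1) hξ.2.le) (by norm_num)

lemma npow_eq_exp {x : ℝ} (hx : 0 < x) (m : ℕ) : x ^ m = Real.exp (m * Real.log x) := by
  rw [← Real.log_pow, Real.exp_log (pow_pos hx m)]

lemma rpow_eq_exp {x : ℝ} (hx : 0 < x) (r : ℝ) : x ^ r = Real.exp (r * Real.log x) := by
  rw [Real.rpow_def_of_pos hx, mul_comm]

lemma factor_eq (c : ℝ) (hc : 0 < c) {x : ℝ} (hx : c < x) (m : ℕ) :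
    (1 - c/x)^m = Real.exp (m * (Real.log (x - c) - Real.log x)) := by
  have hx0 : 0 < x := hc.trans hx
  have h1 : 1 - c/x = (x-c)/x := by field_simp
  rw [h1, npow_eq_exp (div_pos (by linarith) hx0), Real.log_div (by linarith) hx0.ne']

/-- **Two-sided bound on the finite product `∏ (1 − λμ/j)²`** (Lemma 4, inequality part):
with `n₀ = ⌈λμ⌉` and `λμ` not an integer, for all sufficiently large `i`,
the product `∏_{j=n₀+2}^{i} (1 − λμ/j)²` is sandwiched between the two displayed bounds. -/
theorem product_two_sided_bound (lam mu : ℝ) (hlam : 0 < lam) (hmu : 0 < mu)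
    (hnotint : ∀ n : ℕ, lam * mu ≠ (n : ℝ)) :
    ∃ i₀ : ℕ, ∀ i : ℕ, i₀ ≤ i →
      ((1 - lam * mu / (i : ℝ)) ^ (2 * i) *
          ((⌈lam * mu⌉₊ : ℝ) - lam * mu + 1) ^ (2 * lam * mu)) /
        (((i : ℝ) - lam * mu) ^ (2 * lam * mu) *
          (1 - lam * mu / ((⌈lam * mu⌉₊ : ℝ) + 1)) ^ (2 * (⌈lam * mu⌉₊ + 1))) ≤
        ∏ j ∈ Finset.Icc (⌈lam * mu⌉₊ + 2) i, (1 - lam * mu / (j : ℝ)) ^ 2 ∧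
      ∏ j ∈ Finset.Icc (⌈lam * mu⌉₊ + 2) i, (1 - lam * mu / (j : ℝ)) ^ 2 ≤
        ((1 - lam * mu / ((i : ℝ) + 1)) ^ (2 * i + 2) *
            ((⌈lam * mu⌉₊ : ℝ) - lam * mu + 2) ^ (2 * lam * mu)) /
          (((i : ℝ) + 1 - lam * mu) ^ (2 * lam * mu) *
            (1 - lam * mu / ((⌈lam * mu⌉₊ : ℝ) + 2)) ^ (2 * (⌈lam * mu⌉₊ + 2))) := by
  rw [show (2:ℝ) * lam * mu = 2 * (lam * mu) from mul_assoc 2 lam mu]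
  set c := lam * mu with hc_def
  have hc : 0 < c := mul_pos hlam hmu
  set n := ⌈c⌉₊ with hn_def
  have hcn : c < (n:ℝ) := lt_of_le_of_ne (Nat.le_ceil c) (hnotint n)
  -- key telescoping sum inequalities
  have key : ∀ i : ℕ, n + 2 ≤ i →
      Haux c i - Haux c ((n:ℝ)+1) ≤
        ∑ j ∈ Finset.Icc (n+2) i, 2*(Real.log ((j:ℝ) - c) - Real.log (j:ℝ)) ∧
      ∑ j ∈ Finset.Icc (n+2) i, 2*(Real.log ((j:ℝ) - c) - Real.log (j:ℝ)) ≤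
        Haux c ((i:ℝ)+1) - Haux c ((n:ℝ)+2) := by
    intro i hi
    induction i, hi using Nat.le_induction with
    | base =>
      rw [Finset.Icc_self, Finset.sum_singleton]
      have hs1 := (Haux_step c hc (x := (n:ℝ)+1) (by linarith)).2
      have hs2 := (Haux_step c hc (x := (n:ℝ)+2) (by linarith)).1
      push_cast
      constructor
      · calc Haux c ((n:ℝ)+2) - Haux c ((n:ℝ)+1)
            = Haux c (((n:ℝ)+1)+1) - Haux c ((n:ℝ)+1) := by ring_nf
          _ ≤ 2*(Real.log (((n:ℝ)+1)+1-c) - Real.log (((n:ℝ)+1)+1)) := hs1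
          _ = 2*(Real.log (((n:ℝ)+2) - c) - Real.log ((n:ℝ)+2)) := by ring_nf
      · calc 2*(Real.log (((n:ℝ)+2) - c) - Real.log ((n:ℝ)+2))
            ≤ Haux c (((n:ℝ)+2)+1) - Haux c ((n:ℝ)+2) := hs2
          _ = Haux c ((n:ℝ)+2+1) - Haux c ((n:ℝ)+2) := by ring_nf
    | succ i hi ih =>
      have hci : c < (i:ℝ) := by
        have : ((n:ℝ)) + 2 ≤ (i:ℝ) := by exact_mod_cast hi
        linarith
      rw [Finset.sum_Icc_succ_top (by omega : n + 2 ≤ i + 1)]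
      have hs1 := (Haux_step c hc (x := (i:ℝ)) hci).2
      have hs2 := (Haux_step c hc (x := (i:ℝ)+1) (by linarith)).1
      push_cast
      constructor
      · have h1 := ih.1
        calc Haux c ((i:ℝ)+1) - Haux c ((n:ℝ)+1)
            = (Haux c ((i:ℝ)+1) - Haux c (i:ℝ)) + (Haux c (i:ℝ) - Haux c ((n:ℝ)+1)) := by ring
          _ ≤ 2*(Real.log ((i:ℝ)+1-c) - Real.log ((i:ℝ)+1)) +
              ∑ j ∈ Finset.Icc (n+2) i, 2*(Real.log ((j:ℝ) - c) - Real.log (j:ℝ)) :=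
            add_le_add hs1 h1
          _ = _ := by ring
      · have h2 := ih.2
        calc ∑ j ∈ Finset.Icc (n+2) i, 2*(Real.log ((j:ℝ) - c) - Real.log (j:ℝ)) +
              2*(Real.log ((i:ℝ)+1 - c) - Real.log ((i:ℝ)+1))
            ≤ (Haux c ((i:ℝ)+1) - Haux c ((n:ℝ)+2)) +
              (Haux c (((i:ℝ)+1)+1) - Haux c ((i:ℝ)+1)) := add_le_add h2 hs2
          _ = Haux c ((i:ℝ)+1+1) - Haux c ((n:ℝ)+2) := by ring
  refine ⟨n + 2, fun i hi => ?_⟩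
  have hi' : ((n:ℝ)) + 2 ≤ (i:ℝ) := by exact_mod_cast hi
  have hci : c < (i:ℝ) := by linarith
  have hprod : ∏ j ∈ Finset.Icc (n+2) i, (1 - c / (j:ℝ)) ^ 2 =
      Real.exp (∑ j ∈ Finset.Icc (n+2) i, 2*(Real.log ((j:ℝ) - c) - Real.log (j:ℝ))) := by
    rw [Real.exp_sum]
    refine Finset.prod_congr rfl fun j hj => ?_
    have hj2 : n + 2 ≤ j := (Finset.mem_Icc.mp hj).1
    have hcj : c < (j:ℝ) := by
      have : ((n:ℝ)) + 2 ≤ (j:ℝ) := by exact_mod_cast hj2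
      linarith
    rw [factor_eq c hc hcj 2]
    norm_num
  constructor
  · rw [hprod, factor_eq c hc hci (2*i),
      show ((n:ℝ)) - c + 1 = ((n:ℝ)+1) - c from by ring,
      rpow_eq_exp (show (0:ℝ) < ((n:ℝ)+1) - c by linarith) (2*c),
      rpow_eq_exp (show (0:ℝ) < (i:ℝ) - c by linarith) (2*c),
      factor_eq c hc (show c < (n:ℝ)+1 by linarith) (2*(n+1)),
      ← Real.exp_add, ← Real.exp_add, ← Real.exp_sub, Real.exp_le_exp]
    have h := (key i hi).1
    calc (↑(2*i) * (Real.log ((i:ℝ) - c) - Real.log (i:ℝ)) + 2*c * Real.log ((n:ℝ)+1 - c))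
          - (2*c * Real.log ((i:ℝ) - c) +
            ↑(2*(n+1)) * (Real.log (((n:ℝ)+1) - c) - Real.log ((n:ℝ)+1)))
        = Haux c (i:ℝ) - Haux c ((n:ℝ)+1) := by
          simp only [Haux]; push_cast; ring
      _ ≤ _ := h
  · rw [hprod, factor_eq c hc (show c < (i:ℝ)+1 by linarith) (2*i+2),
      show ((n:ℝ)) - c + 2 = ((n:ℝ)+2) - c from by ring,
      rpow_eq_exp (show (0:ℝ) < ((n:ℝ)+2) - c by linarith) (2*c),
      rpow_eq_exp (show (0:ℝ) < (i:ℝ)+1 - c by linarith) (2*c),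
      factor_eq c hc (show c < (n:ℝ)+2 by linarith) (2*(n+2)),
      ← Real.exp_add, ← Real.exp_add, ← Real.exp_sub, Real.exp_le_exp]
    have h := (key i hi).2
    calc ∑ j ∈ Finset.Icc (n+2) i, 2*(Real.log ((j:ℝ) - c) - Real.log (j:ℝ))
        ≤ Haux c ((i:ℝ)+1) - Haux c ((n:ℝ)+2) := h
      _ = (↑(2*i+2) * (Real.log ((i:ℝ)+1 - c) - Real.log ((i:ℝ)+1)) +
            2*c * Real.log ((n:ℝ)+2 - c))
          - (2*c * Real.log ((i:ℝ)+1 - c) +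
            ↑(2*(n+2)) * (Real.log (((n:ℝ)+2) - c) - Real.log ((n:ℝ)+2))) := by
          simp only [Haux]; push_cast; ring
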